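/- For θ ∈ (0, π) and x ∈ {0,1}, the state |x; α⊡_i β⟩ has the expansion |x; α⊡_i β⟩ = (1/√2) · (1/√(1+(−1)^i cos α cos β)) · Σ_{j∈{0,1}} (−1)^{xj} √(1+(−1)^j cos α) √(1+(−1)^{i+j} cos β) |j⟩, for all α, β ∈ (0, π) and i ∈ {0,1}. -/

import Mathlib

open Real

/-- The qubit state `|x; θ⟩ = cos(θ/2)|0⟩ + (-1)^x sin(θ/2)|1⟩`. -/
noncomputable def qubit (x : Fin 2) (θ : ℝ) : Fin 2 → ℝ :=
  ![Real.cos (θ / 2), (-1 : ℝ) ^ (x : ℕ) * Real.sin (θ / 2)]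

/-- The check-node angle
`α ⊡_i β := arccos ((cos α + (-1)^i cos β)/(1 + (-1)^i cos α cos β))`. -/
noncomputable def boxstar (α β : ℝ) (i : ℕ) : ℝ :=
  Real.arccos ((Real.cos α + (-1 : ℝ) ^ i * Real.cos β) /
    (1 + (-1 : ℝ) ^ i * (Real.cos α * Real.cos β)))

private lemma key (a b ε : ℝ) (ha : a ∈ Set.Ioo (-1:ℝ) 1) (hb : b ∈ Set.Ioo (-1:ℝ) 1)
    (hε : ε = 1 ∨ ε = -1) :
    Real.cos (Real.arccos ((a + ε * b) / (1 + ε * (a * b))) / 2)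
      = Real.sqrt (1 + a) * Real.sqrt (1 + ε * b) / (Real.sqrt 2 * Real.sqrt (1 + ε * (a * b)))
    ∧ Real.sin (Real.arccos ((a + ε * b) / (1 + ε * (a * b))) / 2)
      = Real.sqrt (1 - a) * Real.sqrt (1 - ε * b) / (Real.sqrt 2 * Real.sqrt (1 + ε * (a * b))) := by
  obtain ⟨ha1, ha2⟩ := ha
  obtain ⟨hb1, hb2⟩ := hb
  have hεb1 : -1 < ε * b := by rcases hε with h | h <;> subst h <;> nlinarith
  have hεb2 : ε * b < 1 := by rcases hε with h | h <;> subst h <;> nlinarith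
  have hD : 0 < 1 + ε * (a * b) := by nlinarith
  set t := (a + ε * b) / (1 + ε * (a * b)) with ht
  have h1t : 1 + t = (1 + a) * (1 + ε * b) / (1 + ε * (a * b)) := by
    rw [ht, eq_div_iff hD.ne', add_mul, div_mul_cancel₀ _ hD.ne']; ring
  have h2t : 1 - t = (1 - a) * (1 - ε * b) / (1 + ε * (a * b)) := by
    rw [ht, eq_div_iff hD.ne', sub_mul, div_mul_cancel₀ _ hD.ne']; ring
  have htlb : -1 ≤ t := by nlinarith [div_nonneg (by nlinarith : (0:ℝ) ≤ (1+a)*(1+ε*b)) hD.le]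
  have htub : t ≤ 1 := by nlinarith [div_nonneg (by nlinarith : (0:ℝ) ≤ (1-a)*(1-ε*b)) hD.le]
  have hcos : Real.cos (Real.arccos t) = t := Real.cos_arccos htlb htub
  have hbd1 : -π ≤ Real.arccos t := le_trans (neg_nonpos.mpr Real.pi_pos.le) (Real.arccos_nonneg t)
  have hbd2 : Real.arccos t ≤ π := Real.arccos_le_pi t
  have hbd3 : Real.arccos t ≤ 2 * π := le_trans hbd2 (by linarith [Real.pi_pos])
  constructor
  · rw [Real.cos_half hbd1 hbd2, hcos, h1t]
    rw [div_div, Real.sqrt_div (by nlinarith : (0:ℝ) ≤ (1 + a) * (1 + ε * b)),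
      Real.sqrt_mul (by nlinarith : (0:ℝ) ≤ 1 + a), Real.sqrt_mul hD.le 2]
    ring
  · rw [Real.sin_half_eq_sqrt (Real.arccos_nonneg t) hbd3, hcos, h2t]
    rw [div_div, Real.sqrt_div (by nlinarith : (0:ℝ) ≤ (1 - a) * (1 - ε * b)),
      Real.sqrt_mul (by nlinarith : (0:ℝ) ≤ 1 - a), Real.sqrt_mul hD.le 2]
    ring

/-- Expansion of `|x; α ⊡_i β⟩` in the computational basis:
`|x; α⊡_i β⟩ = (1/√2)(1/√(1+(−1)^i cos α cos β)) Σ_j (−1)^{xj}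
√(1+(−1)^j cos α) √(1+(−1)^{i+j} cos β) |j⟩`. -/
theorem boxstar_qubit_expansion (α β : ℝ)
    (hα : α ∈ Set.Ioo 0 π) (hβ : β ∈ Set.Ioo 0 π) (x i : Fin 2) :
    qubit x (boxstar α β (i : ℕ)) = fun j : Fin 2 =>
      (1 / Real.sqrt 2) *
        (1 / Real.sqrt (1 + (-1 : ℝ) ^ (i : ℕ) * (Real.cos α * Real.cos β))) *
        ((-1 : ℝ) ^ ((x : ℕ) * (j : ℕ)) *
          Real.sqrt (1 + (-1 : ℝ) ^ (j : ℕ) * Real.cos α) *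
          Real.sqrt (1 + (-1 : ℝ) ^ ((i : ℕ) + (j : ℕ)) * Real.cos β)) := by
  have key' : ∀ γ : ℝ, γ ∈ Set.Ioo 0 π → Real.cos γ ∈ Set.Ioo (-1:ℝ) 1 := by
    intro γ hγ
    constructor
    · have := Real.cos_lt_cos_of_nonneg_of_le_pi hγ.1.le le_rfl hγ.2
      simpa [Real.cos_pi] using this
    · have := Real.cos_lt_cos_of_nonneg_of_le_pi le_rfl hγ.2.le hγ.1
      simpa using this
  have hc := key (Real.cos α) (Real.cos β) ((-1:ℝ)^(i:ℕ)) (key' α hα) (key' β hβ)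
    (by fin_cases i <;> norm_num)
  funext j
  have h1 : (1:ℝ) + (-1)^((i:ℕ)+1) * Real.cos β = 1 - (-1)^(i:ℕ) * Real.cos β := by
    rw [pow_succ]; ring
  have h2 : (1:ℝ) + (-1)^(1:ℕ) * Real.cos α = 1 - Real.cos α := by ring
  fin_cases j
  · simp only [qubit, boxstar, Matrix.cons_val_zero, Fin.mk_zero, Fin.mk_one, Fin.isValue, Fin.val_zero,
      pow_zero, one_mul, Nat.mul_zero, Nat.add_zero]
    rw [hc.1]
    ring
  · simp only [qubit, boxstar, Matrix.cons_val_one, Matrix.head_cons, Matrix.cons_val_zero, Fin.mk_zero, Fin.mk_one, Fin.isValue,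
      Fin.val_one, Nat.mul_one, h1, h2]
    rw [hc.2]
    ring
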